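/- Let D be an integral domain with quotient field K, and let M be an n×n matrix over D with (monic, degree n) characteristic polynomial p. Then the image set Int(M_n^p(D))(M) = {f(M) : f ∈ Int(M_n^p(D))} equals D[M] = {g(M) : g ∈ D[X]}. -/

import Mathlib

open Polynomial AdjoinRoot Algebra Matrix

/-- Entry formula for the "companion matrix" `leftMulMatrix (powerBasis' hq).basis (root q)`. -/
lemma companion_entry {R : Type*} [CommRing R] {q : Polynomial R} (hq : q.Monic)
    (i j : Fin q.natDegree) :
    Algebra.leftMulMatrix (AdjoinRoot.powerBasis' hq).basis (AdjoinRoot.root q) i j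
      = ((Polynomial.X ^ ((j : ℕ) + 1)) %ₘ q).coeff i := by
  erw [Algebra.leftMulMatrix_eq_repr_mul]
  have hbj : (AdjoinRoot.powerBasis' hq).basis j
      = AdjoinRoot.root q ^ (j : ℕ) := (AdjoinRoot.powerBasis' hq).basis_eq_pow j
  have : AdjoinRoot.root q * (AdjoinRoot.powerBasis' hq).basis j
      = AdjoinRoot.mk q (Polynomial.X ^ ((j : ℕ) + 1)) := by
    rw [hbj, map_pow, AdjoinRoot.mk_X, pow_succ']
  rw [this]
  show ((AdjoinRoot.powerBasisAux' hq).repr _) i = _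
  rw [AdjoinRoot.powerBasisAux'_repr_apply_to_fun, AdjoinRoot.modByMonicHom_mk]

/-- Evaluation of a polynomial at the companion matrix, entry in column `j0` with `↑j0 = 0`. -/
lemma companion_aeval_entry {R : Type*} [CommRing R] {q : Polynomial R} (hq : q.Monic)
    (r : Polynomial R) (i j0 : Fin q.natDegree) (hj0 : (j0 : ℕ) = 0) :
    (Polynomial.aeval
        (Algebra.leftMulMatrix (AdjoinRoot.powerBasis' hq).basis (AdjoinRoot.root q)) r) i j0
      = (r %ₘ q).coeff i := by
  rw [Polynomial.aeval_algHom_apply, AdjoinRoot.aeval_eq]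
  erw [Algebra.leftMulMatrix_eq_repr_mul]
  have hbj : (AdjoinRoot.powerBasis' hq).basis j0
      = AdjoinRoot.root q ^ (j0 : ℕ) := (AdjoinRoot.powerBasis' hq).basis_eq_pow j0
  rw [hbj, hj0, pow_zero, mul_one]
  show ((AdjoinRoot.powerBasisAux' hq).repr _) i = _
  rw [AdjoinRoot.powerBasisAux'_repr_apply_to_fun, AdjoinRoot.modByMonicHom_mk]

/-- The companion matrix has characteristic polynomial `q`. -/
lemma companion_charpoly {R : Type*} [CommRing R] [IsDomain R] {q : Polynomial R}
    (hq : q.Monic) :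
    (Algebra.leftMulMatrix (AdjoinRoot.powerBasis' hq).basis (AdjoinRoot.root q)).charpoly
      = q := by
  set b := (AdjoinRoot.powerBasis' hq).basis
  set C := Algebra.leftMulMatrix b (AdjoinRoot.root q) with hC
  have hmonic : C.charpoly.Monic := Matrix.charpoly_monic C
  have hdeg : C.charpoly.natDegree = q.natDegree := by
    rw [Matrix.charpoly_natDegree_eq_dim, Fintype.card_fin]
    exact AdjoinRoot.powerBasis'_dim hq
  have hzero : Polynomial.aeval (AdjoinRoot.root q) C.charpoly = 0 := by
    apply Algebra.leftMulMatrix_injective b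
    rw [← Polynomial.aeval_algHom_apply, map_zero]
    exact Matrix.aeval_self_charpoly C
  rw [AdjoinRoot.aeval_eq, AdjoinRoot.mk_eq_zero] at hzero
  obtain ⟨u, hu⟩ := hzero
  have hu_monic : u.Monic := hq.of_mul_monic_left (hu ▸ hmonic)
  have hq0 : q ≠ 0 := hq.ne_zero
  have hu0 : u ≠ 0 := hu_monic.ne_zero
  have : q.natDegree + u.natDegree = q.natDegree := by
    rw [← Polynomial.natDegree_mul hq0 hu0, ← hu, hdeg]
  have hu1 : u = 1 := hu_monic.natDegree_eq_zero.mp (by omega)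
  rw [hu, hu1, mul_one]

/-- Let `D` be an integral domain with quotient field `K`, and let `M` be an
`n × n` matrix over `D` with (monic, degree `n`) characteristic polynomial `p`.  Then the image
set `Int(M_n^p(D))(M) = {f(M) : f ∈ Int(M_n^p(D))}` equals `D[M] = {g(M) : g ∈ D[X]}`,
where `Int(M_n^p(D))` consists of the `f ∈ K[X]` such that `f(N)` has all entries in `D`
for every `N ∈ M_n(D)` with characteristic polynomial `p`, and values `f(M)` are computed
in `M_n(K)`. -/
theorem stmt_4 (D : Type*) [CommRing D] [IsDomain D] (K : Type*) [Field K]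
    [Algebra D K] [IsFractionRing D K] (n : ℕ)
    (M : Matrix (Fin n) (Fin n) D) (p : Polynomial D) (hMp : M.charpoly = p) :
    {A : Matrix (Fin n) (Fin n) K | ∃ f : Polynomial K,
        (∀ N : Matrix (Fin n) (Fin n) D, N.charpoly = p → ∀ i j : Fin n,
          (Polynomial.aeval (N.map (algebraMap D K)) f) i j ∈ (algebraMap D K).range) ∧
        Polynomial.aeval (M.map (algebraMap D K)) f = A} =
      {A : Matrix (Fin n) (Fin n) K | ∃ g : Polynomial D,
        (Polynomial.aeval M g).map (algebraMap D K) = A} := by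
  classical
  set φ := algebraMap D K with hφ
  -- the map on matrices as an `AlgHom`
  let Φ : Matrix (Fin n) (Fin n) D →ₐ[D] Matrix (Fin n) (Fin n) K :=
    (Algebra.ofId D K).mapMatrix
  have hΦ : ∀ B : Matrix (Fin n) (Fin n) D, Φ B = B.map φ := fun B => rfl
  have key_map : ∀ (B : Matrix (Fin n) (Fin n) D) (g : Polynomial D),
      (Polynomial.aeval B g).map φ = Polynomial.aeval (B.map φ) (g.map φ) := by
    intro B g
    rw [Polynomial.aeval_map_algebraMap, ← hΦ, ← hΦ, ← Polynomial.aeval_algHom_apply]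
  ext A
  simp only [Set.mem_setOf_eq]
  constructor
  · rintro ⟨f, hf, rfl⟩
    rcases Nat.eq_zero_or_pos n with hn | hn
    · exact ⟨0, by subst hn; exact Subsingleton.elim _ _⟩
    -- p is monic of degree n
    have hpm : p.Monic := hMp ▸ M.charpoly_monic
    have hpd : p.natDegree = n := by
      rw [← hMp, Matrix.charpoly_natDegree_eq_dim, Fintype.card_fin]
    set q : Polynomial K := p.map φ with hq
    have hqm : q.Monic := hpm.map φ
    have hqd : q.natDegree = p.natDegree := hpm.natDegree_map φ
    -- companion matrices over D and K
    set CD := Algebra.leftMulMatrix (AdjoinRoot.powerBasis' hpm).basis (AdjoinRoot.root p)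
      with hCD
    set CK := Algebra.leftMulMatrix (AdjoinRoot.powerBasis' hqm).basis (AdjoinRoot.root q)
      with hCK
    -- relation between the two companion matrices
    have hentry : ∀ (i j : Fin p.natDegree) (i' j' : Fin q.natDegree),
        (i : ℕ) = (i' : ℕ) → (j : ℕ) = (j' : ℕ) → φ (CD i j) = CK i' j' := by
      intro i j i' j' hi hj
      rw [hCD, hCK, companion_entry, companion_entry, ← hi, ← hj, hq]
      rw [show (Polynomial.X : Polynomial K) ^ ((j : ℕ) + 1)
          = Polynomial.map φ (Polynomial.X ^ ((j : ℕ) + 1)) by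
        rw [Polynomial.map_pow, Polynomial.map_X]]
      rw [← Polynomial.map_modByMonic _ hpm, Polynomial.coeff_map]
    -- the reindexed companion matrix over D
    let e : Fin p.natDegree ≃ Fin n := finCongr hpd
    set N : Matrix (Fin n) (Fin n) D := Matrix.reindex e e CD with hN
    have hNcp : N.charpoly = p := by
      rw [hN]
      exact (Matrix.charpoly_reindex e CD).trans (companion_charpoly hpm)
    -- the values of f at N
    have hfN := hf N hNcp
    -- identify aeval at N.map φ with aeval at reindexed CK
    let e' : Fin q.natDegree ≃ Fin n := finCongr (hqd.trans hpd)
    have hNK : N.map φ = Matrix.reindex e' e' CK := by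
      ext i j
      rw [hN]
      show φ (CD (e.symm i) (e.symm j)) = CK (e'.symm i) (e'.symm j)
      exact hentry _ _ _ _ rfl rfl
    have hcoeff : ∀ k : ℕ, (f %ₘ q).coeff k ∈ Set.range φ := by
      intro k
      rcases lt_or_ge k q.natDegree with hk | hk
      · -- use column `e' 0` of `aeval (N.map φ) f`
        have h0 : (0 : ℕ) < q.natDegree := by omega
        obtain ⟨d, hd⟩ := hfN (e' ⟨k, hk⟩) (e' ⟨0, h0⟩)
        refine ⟨d, ?_⟩
        rw [hd]
        have : Polynomial.aeval (N.map φ) f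
            = Matrix.reindex e' e' (Polynomial.aeval CK f) := by
          rw [hNK]
          exact Polynomial.aeval_algHom_apply
            (Matrix.reindexAlgEquiv K K e').toAlgHom CK f
        rw [this]
        show (Polynomial.aeval CK f) (e'.symm (e' ⟨k, hk⟩)) (e'.symm (e' ⟨0, h0⟩))
          = (f %ₘ q).coeff k
        rw [Equiv.symm_apply_apply, Equiv.symm_apply_apply]
        exact companion_aeval_entry hqm f _ _ rfl
      · -- high coefficients vanish
        have hdeg : (f %ₘ q).degree < q.degree := Polynomial.degree_modByMonic_lt f hqm
        have : (f %ₘ q).coeff k = 0 := by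
          apply Polynomial.coeff_eq_zero_of_degree_lt
          exact hdeg.trans_le (Polynomial.degree_le_natDegree.trans (by exact_mod_cast hk))
        rw [this]
        exact ⟨0, map_zero φ⟩
    -- lift `f %ₘ q` to a polynomial over D
    have hlift : f %ₘ q ∈ Polynomial.lifts φ :=
      (Polynomial.lifts_iff_coeff_lifts _).mpr hcoeff
    obtain ⟨g, hg⟩ := hlift
    have hg' : g.map φ = f %ₘ q := hg
    refine ⟨g, ?_⟩
    rw [key_map, hg']
    -- aeval (M.map φ) (f %ₘ q) = aeval (M.map φ) f by Cayley-Hamilton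
    have hMK : (M.map φ).charpoly = q := by
      rw [Matrix.charpoly_map, hMp, hq]
    rw [← hMK]
    exact (Matrix.aeval_eq_aeval_mod_charpoly (M.map φ) f).symm
  · rintro ⟨g, rfl⟩
    refine ⟨g.map φ, fun N _ i j => ?_, (key_map M g).symm⟩
    rw [← key_map]
    exact ⟨(Polynomial.aeval N g) i j, rfl⟩
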